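/- Alternative resolvent formula: under the abstract hypotheses and assuming the set Ẑ_B is nonempty, for any z ∈ ρ(A_B) ∩ ρ(A_{B₁}) one has R_z^B = R_z^{B₁} + G_z^{B₁} Λ̂_z^B (G_{z̄}^{B₁})*, where R_z^{B₁} = R_z + G¹_z Λ_z^{B₁} (G¹_{z̄})* is the resolvent of A_{B₁}, G_z^{B₁} := (τ₂ R_{z̄}^{B₁})* = G²_z + G¹_z Λ_z^{B₁} τ₁ G²_z, and Λ̂_z^B := (B₀ − B₂τ₂G_z^{B₁})⁻¹B₂. -/

import Mathlib

open ComplexConjugate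
noncomputable section

/-- `Rz` is the resolvent `(-A + z)⁻¹` of the (unbounded) operator `A` at `z`. -/
def IsResolventAt {H : Type*} [NormedAddCommGroup H] [InnerProductSpace ℂ H] [CompleteSpace H]
    (A : H →ₗ.[ℂ] H) (z : ℂ) (Rz : H →L[ℂ] H) : Prop :=
  (∀ u : H, ∃ hu : Rz u ∈ A.domain, z • Rz u - A ⟨Rz u, hu⟩ = u) ∧
    ∀ x : A.domain, Rz (z • (x : H) - A x) = x

/-- The block-diagonal operator `P ⊕ Q` between Hilbertian direct sums. -/
def blockDiag {h1 h2 h1' h2' : Type*}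
    [NormedAddCommGroup h1] [InnerProductSpace ℂ h1]
    [NormedAddCommGroup h2] [InnerProductSpace ℂ h2]
    [NormedAddCommGroup h1'] [InnerProductSpace ℂ h1']
    [NormedAddCommGroup h2'] [InnerProductSpace ℂ h2']
    (P : h1 →L[ℂ] h1') (Q : h2 →L[ℂ] h2') :
    WithLp 2 (h1 × h2) →L[ℂ] WithLp 2 (h1' × h2') :=
  ((WithLp.prodContinuousLinearEquiv 2 ℂ h1' h2').symm.toContinuousLinearMap.comp
      (P.prodMap Q)).comp
    (WithLp.prodContinuousLinearEquiv 2 ℂ h1 h2).toContinuousLinearMap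

/-- The full block operator `[[a, b], [c, d]]` on the Hilbertian direct sum. -/
def blockFull {h1 h2 : Type*}
    [NormedAddCommGroup h1] [InnerProductSpace ℂ h1]
    [NormedAddCommGroup h2] [InnerProductSpace ℂ h2]
    (a : h1 →L[ℂ] h1) (b : h2 →L[ℂ] h1) (c : h1 →L[ℂ] h2) (d : h2 →L[ℂ] h2) :
    WithLp 2 (h1 × h2) →L[ℂ] WithLp 2 (h1 × h2) :=
  ((WithLp.prodContinuousLinearEquiv 2 ℂ h1 h2).symm.toContinuousLinearMap.comp
      ((a.coprod b).prod (c.coprod d))).comp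
    (WithLp.prodContinuousLinearEquiv 2 ℂ h1 h2).toContinuousLinearMap

/-- The row operator `[G¹, G²]` on the Hilbertian direct sum. -/
def coprodL2 {H h1 h2 : Type*}
    [NormedAddCommGroup H] [InnerProductSpace ℂ H]
    [NormedAddCommGroup h1] [InnerProductSpace ℂ h1]
    [NormedAddCommGroup h2] [InnerProductSpace ℂ h2]
    (F1 : h1 →L[ℂ] H) (F2 : h2 →L[ℂ] H) : WithLp 2 (h1 × h2) →L[ℂ] H :=
  (F1.coprod F2).comp (WithLp.prodContinuousLinearEquiv 2 ℂ h1 h2).toContinuousLinearMap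

set_option linter.unusedSectionVars false
set_option maxHeartbeats 1000000

section AuxBlk
variable {H h1 h2 k1 k2 l1 l2 : Type*}
    [NormedAddCommGroup H] [InnerProductSpace ℂ H]
    [NormedAddCommGroup h1] [InnerProductSpace ℂ h1]
    [NormedAddCommGroup h2] [InnerProductSpace ℂ h2]
    [NormedAddCommGroup k1] [InnerProductSpace ℂ k1]
    [NormedAddCommGroup k2] [InnerProductSpace ℂ k2]
    [NormedAddCommGroup l1] [InnerProductSpace ℂ l1]
    [NormedAddCommGroup l2] [InnerProductSpace ℂ l2]

def blk (a : h1 →L[ℂ] k1) (b : h2 →L[ℂ] k1) (c : h1 →L[ℂ] k2) (d : h2 →L[ℂ] k2) :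
    WithLp 2 (h1 × h2) →L[ℂ] WithLp 2 (k1 × k2) :=
  ((WithLp.prodContinuousLinearEquiv 2 ℂ k1 k2).symm.toContinuousLinearMap.comp
      ((a.coprod b).prod (c.coprod d))).comp
    (WithLp.prodContinuousLinearEquiv 2 ℂ h1 h2).toContinuousLinearMap

lemma blk_congr {a a' : h1 →L[ℂ] k1} {b b' : h2 →L[ℂ] k1} {c c' : h1 →L[ℂ] k2}
    {d d' : h2 →L[ℂ] k2} (ha : a = a') (hb : b = b') (hc : c = c') (hd : d = d') :
    blk a b c d = blk a' b' c' d' := by subst ha hb hc hd; rfl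

lemma blk_apply (a : h1 →L[ℂ] k1) (b : h2 →L[ℂ] k1) (c : h1 →L[ℂ] k2) (d : h2 →L[ℂ] k2)
    (x : WithLp 2 (h1 × h2)) :
    blk a b c d x = (WithLp.prodContinuousLinearEquiv 2 ℂ k1 k2).symm
      (a x.fst + b x.snd, c x.fst + d x.snd) := rfl

lemma withlp_ext {x y : WithLp 2 (h1 × h2)} (h1 : x.fst = y.fst) (h2 : x.snd = y.snd) :
    x = y := congrArg (WithLp.toLp 2) (Prod.ext h1 h2)

lemma blk_comp_blk (a : k1 →L[ℂ] l1) (b : k2 →L[ℂ] l1) (c : k1 →L[ℂ] l2) (d : k2 →L[ℂ] l2)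
    (a' : h1 →L[ℂ] k1) (b' : h2 →L[ℂ] k1) (c' : h1 →L[ℂ] k2) (d' : h2 →L[ℂ] k2) :
    (blk a b c d).comp (blk a' b' c' d') =
      blk (a.comp a' + b.comp c') (a.comp b' + b.comp d')
        (c.comp a' + d.comp c') (c.comp b' + d.comp d') := by
  ext x : 1
  refine withlp_ext ?_ ?_ <;>
    simp [blk_apply, ContinuousLinearMap.comp_apply, map_add] <;> abel

lemma blk_sub_blk (a a' : h1 →L[ℂ] k1) (b b' : h2 →L[ℂ] k1) (c c' : h1 →L[ℂ] k2)
    (d d' : h2 →L[ℂ] k2) :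
    blk a b c d - blk a' b' c' d' = blk (a - a') (b - b') (c - c') (d - d') := by
  ext x : 1
  refine withlp_ext ?_ ?_ <;> simp [blk_apply] <;> abel

lemma blockDiag_eq_blk (P : h1 →L[ℂ] k1) (Q : h2 →L[ℂ] k2) :
    blockDiag P Q = blk P 0 0 Q := by
  ext x : 1
  refine withlp_ext ?_ ?_ <;> simp [blk_apply, blockDiag]

lemma blockFull_eq_blk (a : h1 →L[ℂ] h1) (b : h2 →L[ℂ] h1) (c : h1 →L[ℂ] h2)
    (d : h2 →L[ℂ] h2) : blockFull a b c d = blk a b c d := rfl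

lemma coprodL2_comp_blk (F1 : k1 →L[ℂ] H) (F2 : k2 →L[ℂ] H)
    (a : h1 →L[ℂ] k1) (b : h2 →L[ℂ] k1) (c : h1 →L[ℂ] k2) (d : h2 →L[ℂ] k2) :
    (coprodL2 F1 F2).comp (blk a b c d) =
      coprodL2 (F1.comp a + F2.comp c) (F1.comp b + F2.comp d) := by
  ext x : 1
  simp [coprodL2, blk_apply, ContinuousLinearMap.comp_apply]

variable [CompleteSpace H] [CompleteSpace h1] [CompleteSpace h2]

lemma coprodL2_adjoint (F1 : h1 →L[ℂ] H) (F2 : h2 →L[ℂ] H) :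
    (coprodL2 F1 F2).adjoint =
      (WithLp.prodContinuousLinearEquiv 2 ℂ h1 h2).symm.toContinuousLinearMap.comp
        (F1.adjoint.prod F2.adjoint) := by
  symm
  rw [ContinuousLinearMap.eq_adjoint_iff]
  intro x y
  simp [coprodL2, WithLp.prod_inner_apply, ContinuousLinearMap.adjoint_inner_left,
    inner_add_right]

lemma coprodL2_comp_col (F1 : h1 →L[ℂ] H) (F2 : h2 →L[ℂ] H) (P : H →L[ℂ] h1) (Q : H →L[ℂ] h2) :
    (coprodL2 F1 F2).comp
        ((WithLp.prodContinuousLinearEquiv 2 ℂ h1 h2).symm.toContinuousLinearMap.comp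
          (P.prod Q)) = F1.comp P + F2.comp Q := by
  ext u : 1
  simp [coprodL2, ContinuousLinearMap.comp_apply]

end AuxBlk

section Solve
variable {h1 h2 h22 : Type*}
    [NormedAddCommGroup h1] [InnerProductSpace ℂ h1]
    [NormedAddCommGroup h2] [InnerProductSpace ℂ h2]
    [NormedAddCommGroup h22] [InnerProductSpace ℂ h22]

lemma solveR1 {B₁ t M : h1 →L[ℂ] h1} (hr : (1 - B₁.comp t).comp M = 1)
    {W : Type*} [NormedAddCommGroup W] [NormedSpace ℂ W] (X : W →L[ℂ] h1) :
    B₁.comp (t.comp (M.comp X)) = M.comp X - X := by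
  have h := congrArg (fun T : h1 →L[ℂ] h1 => T.comp X) hr
  simp only [ContinuousLinearMap.sub_comp, ContinuousLinearMap.comp_assoc,
    ContinuousLinearMap.one_def, ContinuousLinearMap.id_comp] at h
  generalize hu : M.comp X = u at h ⊢
  rw [← h]; abel

lemma solveR2 {B₀ B₂ : h2 →L[ℂ] h22} {t22 : h2 →L[ℂ] h2} {t21 : h1 →L[ℂ] h2}
    {t12 : h2 →L[ℂ] h1} {B₁ M1 : h1 →L[ℂ] h1} {M : h22 →L[ℂ] h2}
    (hr : (B₀ - B₂.comp (t22 + t21.comp ((M1.comp B₁).comp t12))).comp M = 1)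
    {W : Type*} [NormedAddCommGroup W] [NormedSpace ℂ W] (X : W →L[ℂ] h22) :
    B₀.comp (M.comp X) =
      X + B₂.comp (t22.comp (M.comp X)) +
        B₂.comp (t21.comp (M1.comp (B₁.comp (t12.comp (M.comp X))))) := by
  have h := congrArg (fun T : h22 →L[ℂ] h22 => T.comp X) hr
  simp only [ContinuousLinearMap.comp_add, ContinuousLinearMap.add_comp,
    ContinuousLinearMap.sub_comp, ContinuousLinearMap.comp_assoc,
    ContinuousLinearMap.one_def, ContinuousLinearMap.id_comp] at h
  generalize hu : M.comp X = u at h ⊢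
  rw [← h]; abel

end Solve

/-- **alternative resolvent formula.** Under the abstract Kreĭn hypotheses and
assuming the set `Ẑ_B` is nonempty (realized here by the set `Z` on which all the inverses
below exist), for any `z ∈ ρ(A_B) ∩ ρ(A_{B₁})` one has
`R_z^B = R_z^{B₁} + G_z^{B₁} Λ̂_z^B (G_{z̄}^{B₁})*`, where
`R_z^{B₁} = R_z + G¹_z Λ_z^{B₁} (G¹_{z̄})*`, `Λ_z^{B₁} = (1 − B₁τ₁G¹_z)⁻¹B₁`,
`G_z^{B₁} = G²_z + G¹_z Λ_z^{B₁} τ₁G²_z`, `Λ̂_z^B = (B₀ − B₂τ₂G_z^{B₁})⁻¹B₂`, and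
`R_z^B = R_z + G_z Λ_z^B G_{z̄}*` is the full Kreĭn resolvent with
`Λ_z^B = ((1 ⊕ B₀) − (B₁ ⊕ B₂)τG_z)⁻¹(B₁ ⊕ B₂)`.
Here `t11 z, t12 z, t21 z, t22 z` denote the extensions of `τ₁G¹_z, τ₁G²_z, τ₂G¹_z, τ₂G²_z`. -/
theorem statement_11 {H h1 h2 h22 : Type*}
    [NormedAddCommGroup H] [InnerProductSpace ℂ H] [CompleteSpace H]
    [NormedAddCommGroup h1] [InnerProductSpace ℂ h1] [CompleteSpace h1]
    [NormedAddCommGroup h2] [InnerProductSpace ℂ h2] [CompleteSpace h2]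
    [NormedAddCommGroup h22] [InnerProductSpace ℂ h22] [CompleteSpace h22]
    (A : H →ₗ.[ℂ] H) (hA : IsSelfAdjoint A)
    (Z : Set ℂ) (hZconj : ∀ z ∈ Z, conj z ∈ Z)
    (R : ℂ → H →L[ℂ] H) (hZres : ∀ z ∈ Z, IsResolventAt A z (R z))
    (τ₁ : A.domain →ₗ[ℂ] h1) (τ₂ : A.domain →ₗ[ℂ] h2)
    (hτbdd : ∃ C : ℝ, ∀ x : A.domain, ‖τ₁ x‖ + ‖τ₂ x‖ ≤ C * (‖(x : H)‖ + ‖A x‖))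
    (hker₂ : Dense {u : H | ∃ hu : u ∈ A.domain, τ₂ ⟨u, hu⟩ = 0})
    (hran₂ : DenseRange τ₂)
    (T1 : ℂ → H →L[ℂ] h1) (T2 : ℂ → H →L[ℂ] h2)
    (hT1 : ∀ z ∈ Z, ∀ (u : H) (hu : R z u ∈ A.domain), T1 z u = τ₁ ⟨R z u, hu⟩)
    (hT2 : ∀ z ∈ Z, ∀ (u : H) (hu : R z u ∈ A.domain), T2 z u = τ₂ ⟨R z u, hu⟩)
    (G1 : ℂ → h1 →L[ℂ] H) (G2 : ℂ → h2 →L[ℂ] H)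
    (hG1 : ∀ z ∈ Z, G1 z = (T1 (conj z)).adjoint)
    (hG2 : ∀ z ∈ Z, G2 z = (T2 (conj z)).adjoint)
    (t11 : ℂ → h1 →L[ℂ] h1) (t12 : ℂ → h2 →L[ℂ] h1)
    (t21 : ℂ → h1 →L[ℂ] h2) (t22 : ℂ → h2 →L[ℂ] h2)
    (hext11 : ∀ z ∈ Z, ∀ (φ : h1) (h : G1 z φ ∈ A.domain), t11 z φ = τ₁ ⟨G1 z φ, h⟩)
    (hext12 : ∀ z ∈ Z, ∀ (φ : h2) (h : G2 z φ ∈ A.domain), t12 z φ = τ₁ ⟨G2 z φ, h⟩)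
    (hext21 : ∀ z ∈ Z, ∀ (φ : h1) (h : G1 z φ ∈ A.domain), t21 z φ = τ₂ ⟨G1 z φ, h⟩)
    (hext22 : ∀ z ∈ Z, ∀ (φ : h2) (h : G2 z φ ∈ A.domain), t22 z φ = τ₂ ⟨G2 z φ, h⟩)
    (hadj11 : ∀ z ∈ Z, (t11 z).adjoint = t11 (conj z))
    (hadj12 : ∀ z ∈ Z, (t12 z).adjoint = t21 (conj z))
    (hadj22 : ∀ z ∈ Z, (t22 z).adjoint = t22 (conj z))
    (B₀ : h2 →L[ℂ] h22) (B₁ : h1 →L[ℂ] h1) (B₂ : h2 →L[ℂ] h22)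
    (hB₁ : IsSelfAdjoint B₁) (hB₀₂ : B₀.comp B₂.adjoint = B₂.comp B₀.adjoint)
    -- bounded inverse of `M_z^{B₁} = 1 − B₁ τ₁G¹_z`
    (MB1inv : ℂ → h1 →L[ℂ] h1)
    (hMB1 : ∀ z ∈ Z, (MB1inv z).comp (1 - B₁.comp (t11 z)) = 1 ∧
      (1 - B₁.comp (t11 z)).comp (MB1inv z) = 1)
    -- bounded inverse of the full `M_z^B = (1 ⊕ B₀) − (B₁ ⊕ B₂) τG_z`
    (Minv : ℂ → WithLp 2 (h1 × h22) →L[ℂ] WithLp 2 (h1 × h2))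
    (hMinv : ∀ z ∈ Z,
      (Minv z).comp (blockDiag (1 : h1 →L[ℂ] h1) B₀ -
        (blockDiag B₁ B₂).comp (blockFull (t11 z) (t12 z) (t21 z) (t22 z))) = 1 ∧
      (blockDiag (1 : h1 →L[ℂ] h1) B₀ -
        (blockDiag B₁ B₂).comp (blockFull (t11 z) (t12 z) (t21 z) (t22 z))).comp (Minv z) = 1)
    -- bounded inverse of `M̂_z^B = B₀ − B₂ τ₂ G_z^{B₁}`
    (Mhatinv : ℂ → h22 →L[ℂ] h2)
    (hMhat : ∀ z ∈ Z,
      (Mhatinv z).comp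
        (B₀ - B₂.comp (t22 z + (t21 z).comp (((MB1inv z).comp B₁).comp (t12 z)))) = 1 ∧
      (B₀ - B₂.comp (t22 z + (t21 z).comp (((MB1inv z).comp B₁).comp (t12 z)))).comp
        (Mhatinv z) = 1) :
    ∀ z ∈ Z,
      R z + ((coprodL2 (G1 z) (G2 z)).comp ((Minv z).comp (blockDiag B₁ B₂))).comp
          ((coprodL2 (G1 (conj z)) (G2 (conj z))).adjoint)
        = (R z + ((G1 z).comp ((MB1inv z).comp B₁)).comp ((G1 (conj z)).adjoint))
          + (((G2 z + ((G1 z).comp ((MB1inv z).comp B₁)).comp (t12 z)).comp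
              ((Mhatinv z).comp B₂)).comp
            ((G2 (conj z) + ((G1 (conj z)).comp ((MB1inv (conj z)).comp B₁)).comp
              (t12 (conj z))).adjoint)) := by
  
  intro z hz
  have hz' : conj z ∈ Z := hZconj z hz
  have hcc : conj (conj z) = z := Complex.conj_conj z
  obtain ⟨h1l, h1r⟩ := hMB1 z hz
  obtain ⟨h1l', h1r'⟩ := hMB1 (conj z) hz'
  obtain ⟨hMl, -⟩ := hMinv z hz
  obtain ⟨-, hHr⟩ := hMhat z hz
  have hB₁a : ContinuousLinearMap.adjoint B₁ = B₁ := by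
    rw [← ContinuousLinearMap.star_eq_adjoint]; exact hB₁
  -- the Kreĭn map as a 2×2 block
  have hMblk : blockDiag (1 : h1 →L[ℂ] h1) B₀ -
      (blockDiag B₁ B₂).comp (blockFull (t11 z) (t12 z) (t21 z) (t22 z)) =
      blk (1 - B₁.comp (t11 z)) (-(B₁.comp (t12 z))) (-(B₂.comp (t21 z)))
        (B₀ - B₂.comp (t22 z)) := by
    rw [blockDiag_eq_blk, blockDiag_eq_blk, blockFull_eq_blk, blk_comp_blk, blk_sub_blk]
    exact blk_congr (by simp) (by simp) (by simp) (by simp)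
  have key : (blockDiag (1 : h1 →L[ℂ] h1) B₀ -
      (blockDiag B₁ B₂).comp (blockFull (t11 z) (t12 z) (t21 z) (t22 z))).comp
      (blk ((MB1inv z).comp B₁ +
          ((MB1inv z).comp B₁).comp ((t12 z).comp (((Mhatinv z).comp B₂).comp
            ((t21 z).comp ((MB1inv z).comp B₁)))))
        (((MB1inv z).comp B₁).comp ((t12 z).comp ((Mhatinv z).comp B₂)))
        (((Mhatinv z).comp B₂).comp ((t21 z).comp ((MB1inv z).comp B₁)))
        ((Mhatinv z).comp B₂)) = blockDiag B₁ B₂ := by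
    rw [hMblk, blk_comp_blk, blockDiag_eq_blk]
    refine blk_congr ?_ ?_ ?_ ?_ <;>
      · simp only [ContinuousLinearMap.comp_add, ContinuousLinearMap.add_comp,
          ContinuousLinearMap.comp_sub, ContinuousLinearMap.sub_comp,
          ContinuousLinearMap.neg_comp, ContinuousLinearMap.comp_neg,
          ContinuousLinearMap.one_def,
      ContinuousLinearMap.id_comp, ContinuousLinearMap.comp_assoc,
          solveR1 h1r, solveR2 hHr]
        abel
  have hLam : (Minv z).comp (blockDiag B₁ B₂) =
      blk ((MB1inv z).comp B₁ +
          ((MB1inv z).comp B₁).comp ((t12 z).comp (((Mhatinv z).comp B₂).comp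
            ((t21 z).comp ((MB1inv z).comp B₁)))))
        (((MB1inv z).comp B₁).comp ((t12 z).comp ((Mhatinv z).comp B₂)))
        (((Mhatinv z).comp B₂).comp ((t21 z).comp ((MB1inv z).comp B₁)))
        ((Mhatinv z).comp B₂) := by
    conv_lhs => rw [← key]
    rw [← ContinuousLinearMap.comp_assoc, hMl, ContinuousLinearMap.one_def,
      ContinuousLinearMap.id_comp]
  -- adjoint of MB1inv at conj z
  have hadj1 : ContinuousLinearMap.adjoint (t11 (conj z)) = t11 z := by
    rw [hadj11 (conj z) hz', hcc]
  have hY2 : (1 - (t11 z).comp B₁).comp (ContinuousLinearMap.adjoint (MB1inv (conj z))) = 1 := by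
    have h := congrArg (fun T : h1 →L[ℂ] h1 => ContinuousLinearMap.adjoint T) h1l'
    simpa only [ContinuousLinearMap.adjoint_comp, map_sub, ContinuousLinearMap.one_def,
      ContinuousLinearMap.adjoint_id, hadj1, hB₁a] using h
  have Aa : B₁.comp (ContinuousLinearMap.adjoint (MB1inv (conj z))) = (MB1inv z).comp B₁ := by
    set Y := ContinuousLinearMap.adjoint (MB1inv (conj z)) with hYdef
    have e1 : ((MB1inv z).comp B₁).comp ((1 - (t11 z).comp B₁).comp Y) =
        (MB1inv z).comp B₁ := by rw [hY2, ContinuousLinearMap.one_def,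
      ContinuousLinearMap.comp_id]
    have swap : B₁.comp (1 - (t11 z).comp B₁) = (1 - B₁.comp (t11 z)).comp B₁ := by
      simp only [ContinuousLinearMap.comp_sub, ContinuousLinearMap.sub_comp,
        ContinuousLinearMap.one_def,
        ContinuousLinearMap.comp_id, ContinuousLinearMap.id_comp,
        ContinuousLinearMap.comp_assoc]
    have e2 : ((MB1inv z).comp B₁).comp ((1 - (t11 z).comp B₁).comp Y) = B₁.comp Y := by
      calc ((MB1inv z).comp B₁).comp ((1 - (t11 z).comp B₁).comp Y)
          = (MB1inv z).comp ((B₁.comp (1 - (t11 z).comp B₁)).comp Y) := by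
            simp only [ContinuousLinearMap.comp_assoc]
        _ = (MB1inv z).comp (((1 - B₁.comp (t11 z)).comp B₁).comp Y) := by rw [swap]
        _ = ((MB1inv z).comp (1 - B₁.comp (t11 z))).comp (B₁.comp Y) := by
            simp only [ContinuousLinearMap.comp_assoc]
        _ = B₁.comp Y := by rw [h1l, ContinuousLinearMap.one_def,
      ContinuousLinearMap.id_comp]
    rw [← e2, e1]
  -- adjoint of the row operator on the right-hand side
  have hadjRow : ContinuousLinearMap.adjoint
      (G2 (conj z) + ((G1 (conj z)).comp ((MB1inv (conj z)).comp B₁)).comp (t12 (conj z))) =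
      ContinuousLinearMap.adjoint (G2 (conj z)) +
        ((t21 z).comp ((MB1inv z).comp B₁)).comp
          (ContinuousLinearMap.adjoint (G1 (conj z))) := by
    rw [map_add]
    congr 1
    rw [ContinuousLinearMap.adjoint_comp, ContinuousLinearMap.adjoint_comp,
      ContinuousLinearMap.adjoint_comp, hadj12 (conj z) hz', hcc, hB₁a, Aa]
    simp only [ContinuousLinearMap.comp_assoc]
  rw [hLam, coprodL2_adjoint, coprodL2_comp_blk, coprodL2_comp_col, hadjRow]
  simp only [ContinuousLinearMap.comp_add, ContinuousLinearMap.add_comp,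
    ContinuousLinearMap.comp_assoc]
  abel
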